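/- Let p ∈ ω*, let X ⊆ ω* be 𝒯(p)-open, and let c : X → {0,1} be a coloring such that no subspace of X homeomorphic to ω ∪ {p} (with the subspace topology from β(ω)) is monochromatic. Then c extends to a coloring c̃ : X^p → {0,1} with no monochromatic copy of ω ∪ {p}. -/

import Mathlib

/-- The Stone–Čech remainder `ω* = β(ω) \ ω`. -/
def omegaStar : Set (StoneCech ℕ) := (Set.range (stoneCechUnit : ℕ → StoneCech ℕ))ᶜ

/-- The Stone extension `f̄ : β(ω) → β(ω)` of a map `f : ω → β(ω)`. -/
noncomputable def stoneExt (f : ℕ → StoneCech ℕ) : StoneCech ℕ → StoneCech ℕ :=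
  stoneCechExtend (continuous_of_discreteTopology (f := f))

/-- `pOp p X = X^p`: the set `X` together with all its `p`-limits `f̄(p)` through countable
discrete subsets `f[ω] ⊆ X` (with `f : ω ≈ f[ω]`, i.e. `f` injective with discrete range). -/
def pOp (p : StoneCech ℕ) (X : Set (StoneCech ℕ)) : Set (StoneCech ℕ) :=
  X ∪ {y | ∃ f : ℕ → StoneCech ℕ, Function.Injective f ∧ Set.range f ⊆ X ∧
    DiscreteTopology (Set.range f) ∧ stoneExt f p = y}

/-- `X` is `𝒯(p)`-open: `X ⊆ ω*` and its complement in `ω*` is `𝒯(p)`-closed,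
i.e. fixed by the operator `X ↦ X^p`. -/
def TpOpen (p : StoneCech ℕ) (X : Set (StoneCech ℕ)) : Prop :=
  X ⊆ omegaStar ∧ pOp p (omegaStar \ X) = omegaStar \ X

/-- The subspace `ω ∪ {p}` of `β(ω)`. -/
def omegaP (p : StoneCech ℕ) : Set (StoneCech ℕ) :=
  Set.range stoneCechUnit ∪ {p}

open Filter Topology Set Function

noncomputable section

attribute [local instance] Classical.propDecidable

namespace L59


lemma dense_unit : Dense (range (stoneCechUnit : ℕ → StoneCech ℕ)) :=
  denseRange_stoneCechUnit

lemma forall_of_unit {P : Set (StoneCech ℕ)} (hcl : IsClosed P)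
    (h : ∀ n, stoneCechUnit n ∈ P) (u : StoneCech ℕ) : u ∈ P := by
  have : closure (range (stoneCechUnit : ℕ → StoneCech ℕ)) ⊆ P :=
    hcl.closure_subset_iff.2 (by rintro - ⟨n, rfl⟩; exact h n)
  exact this (by rw [dense_unit.closure_eq]; trivial)

/-- extension of the (boolean) indicator function of `W` to `βℕ`. -/
noncomputable def chi (W : Set ℕ) : StoneCech ℕ → Bool :=
  stoneCechExtend (continuous_of_discreteTopology
    (f := fun n => if n ∈ W then true else false))

lemma chi_cont (W : Set ℕ) : Continuous (chi W) := continuous_stoneCechExtend _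

lemma chi_unit (W : Set ℕ) (n : ℕ) :
    chi W (stoneCechUnit n) = if n ∈ W then true else false :=
  congrFun (stoneCechExtend_extends _) n

lemma chi_univ (u : StoneCech ℕ) : chi Set.univ u = true := by
  have : chi Set.univ = fun _ => true := by
    refine Continuous.ext_on dense_unit (chi_cont _) continuous_const ?_
    rintro - ⟨n, rfl⟩; simp [chi_unit]
  rw [this]

lemma chi_inter (W W' : Set ℕ) (u : StoneCech ℕ) :
    chi (W ∩ W') u = (chi W u && chi W' u) := by
  have : chi (W ∩ W') = fun z => chi W z && chi W' z := by
    refine Continuous.ext_on dense_unit (chi_cont _) ?_ ?_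
    · exact (continuous_of_discreteTopology
        (f := fun q : Bool × Bool => q.1 && q.2)).comp ((chi_cont W).prodMk (chi_cont W'))
    rintro - ⟨n, rfl⟩
    simp only [chi_unit]
    by_cases h : n ∈ W <;> by_cases h' : n ∈ W' <;>
      simp [h, h', Set.mem_inter_iff]
  rw [this]

lemma chi_compl (W : Set ℕ) (u : StoneCech ℕ) : chi (Wᶜ) u = !(chi W u) := by
  have : chi (Wᶜ) = fun z => !(chi W z) := by
    refine Continuous.ext_on dense_unit (chi_cont _) ?_ ?_
    · exact (continuous_of_discreteTopology (f := fun b : Bool => !b)).comp (chi_cont W)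
    rintro - ⟨n, rfl⟩
    simp only [chi_unit]
    by_cases h : n ∈ W <;> simp [h]
  rw [this]

lemma chi_mono {W W' : Set ℕ} (h : W ⊆ W') {u : StoneCech ℕ}
    (hW : chi W u = true) : chi W' u = true := by
  have h1 : W ∩ W' = W := Set.inter_eq_left.2 h
  have h2 := chi_inter W W' u
  rw [h1, hW] at h2
  simpa using h2.symm

/-- The ultrafilter on `ℕ` corresponding to a point of `βℕ`. -/
noncomputable def uf (u : StoneCech ℕ) : Ultrafilter ℕ :=
  Ultrafilter.ofComplNotMemIff
    { sets := {W | chi W u = true}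
      univ_sets := chi_univ u
      sets_of_superset := fun hW hss => chi_mono hss hW
      inter_sets := fun {W W'} hW hW' => by
        have := chi_inter W W' u
        simp only [Set.mem_setOf_eq] at *
        rw [this, hW, hW']; rfl }
    (by
      intro W
      show ¬ chi (Wᶜ) u = true ↔ chi W u = true
      rw [chi_compl]
      cases chi W u <;> simp)

lemma mem_uf {W : Set ℕ} {u : StoneCech ℕ} : W ∈ uf u ↔ chi W u = true := Iff.rfl

lemma tendsto_unit_uf (u : StoneCech ℕ) :
    Tendsto stoneCechUnit (uf u : Filter ℕ) (𝓝 u) := by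
  rw [tendsto_nhds]
  intro V hV huV
  show chi (stoneCechUnit ⁻¹' V) u = true
  set B := stoneCechUnit ⁻¹' V with hB
  have hmem : u ∈ closure (stoneCechUnit '' B) := by
    rw [mem_closure_iff]
    intro O hO huO
    have hne : (O ∩ V).Nonempty := ⟨u, huO, huV⟩
    obtain ⟨n, hn⟩ := denseRange_stoneCechUnit.exists_mem_open (hO.inter hV) hne
    exact ⟨stoneCechUnit n, hn.1, ⟨n, hn.2, rfl⟩⟩
  have hcl : IsClosed {z | chi B z = true} :=
    IsClosed.preimage (chi_cont B) (isClosed_discrete ({true} : Set Bool))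
  have hsub : stoneCechUnit '' B ⊆ {z | chi B z = true} := by
    rintro - ⟨n, hn, rfl⟩
    simp [chi_unit, hn]
  exact hcl.closure_subset_iff.2 hsub hmem

lemma unit_injective : Function.Injective (stoneCechUnit : ℕ → StoneCech ℕ) := by
  intro n m h
  have h1 : chi {n} (stoneCechUnit n) = true := by simp [chi_unit]
  rw [h] at h1
  rw [chi_unit] at h1
  by_contra hne
  simp [Ne.symm hne] at h1

lemma uf_unit (n : ℕ) : uf (stoneCechUnit n) = pure n := by
  ext W
  rw [mem_uf, chi_unit, Ultrafilter.mem_pure]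
  by_cases h : n ∈ W <;> simp [h]

lemma uf_injective : Function.Injective uf := by
  intro u v h
  exact tendsto_nhds_unique (tendsto_unit_uf u) (h ▸ tendsto_unit_uf v)

lemma tendsto_stoneExt (g : ℕ → StoneCech ℕ) (p : StoneCech ℕ) :
    Tendsto g (uf p : Filter ℕ) (𝓝 (stoneExt g p)) := by
  have h1 : Tendsto (stoneExt g) (𝓝 p) (𝓝 (stoneExt g p)) :=
    (continuous_stoneCechExtend _).tendsto p
  have h2 := h1.comp (tendsto_unit_uf p)
  have h3 : stoneExt g ∘ stoneCechUnit = g := stoneCechExtend_extends _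
  rwa [h3] at h2

lemma stoneExt_eq_of_tendsto {g : ℕ → StoneCech ℕ} {p x : StoneCech ℕ}
    (h : Tendsto g (uf p : Filter ℕ) (𝓝 x)) : stoneExt g p = x :=
  tendsto_nhds_unique (tendsto_stoneExt g p) h

lemma isOpen_chiT (W : Set ℕ) : IsOpen {z | chi W z = true} :=
  IsOpen.preimage (chi_cont W) (isOpen_discrete ({true} : Set Bool))

lemma isOpen_chiF (W : Set ℕ) : IsOpen {z | chi W z = false} :=
  IsOpen.preimage (chi_cont W) (isOpen_discrete ({false} : Set Bool))

/-- the Frolík sum formula. -/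
lemma uf_sum {g : ℕ → StoneCech ℕ} {p x : StoneCech ℕ} (h : stoneExt g p = x)
    (W : Set ℕ) : W ∈ uf x ↔ {n | W ∈ uf (g n)} ∈ uf p := by
  have ht : Tendsto g (uf p : Filter ℕ) (𝓝 x) := h ▸ tendsto_stoneExt g p
  constructor
  · intro hW
    have hVo : IsOpen {z | chi W z = true} := isOpen_chiT W
    have h2 := ht (hVo.mem_nhds (show x ∈ {z | chi W z = true} from hW))
    exact Filter.mem_of_superset h2 (by intro n hn; exact hn)
  · intro hmem
    by_contra hW
    have hWc : Wᶜ ∈ uf x := Ultrafilter.compl_mem_iff_notMem.2 hW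
    have hVo : IsOpen {z | chi (Wᶜ) z = true} := isOpen_chiT _
    have h2 := ht (hVo.mem_nhds (show x ∈ {z | chi (Wᶜ) z = true} from hWc))
    have h3 : {n | Wᶜ ∈ uf (g n)} ∈ uf p := Filter.mem_of_superset h2 (fun n hn => hn)
    have h4 : {n | Wᶜ ∈ uf (g n)} = {n | W ∈ uf (g n)}ᶜ := by
      ext n
      simp only [Set.mem_setOf_eq, Set.mem_compl_iff]
      exact Ultrafilter.compl_mem_iff_notMem
    rw [h4] at h3
    exact Ultrafilter.compl_notMem_iff.2 hmem h3

lemma uf_free {u : StoneCech ℕ} (hu : u ∈ omegaStar) : ∀ S ∈ uf u, S.Infinite := by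
  intro S hS
  by_contra hinf
  rw [Set.not_infinite] at hinf
  obtain ⟨a, _, ha⟩ := Ultrafilter.eq_pure_of_finite_mem hinf hS
  rw [← uf_unit] at ha
  exact hu ⟨a, (uf_injective ha).symm⟩

lemma isOpen_singleton_unit (n : ℕ) :
    IsOpen ({stoneCechUnit n} : Set (StoneCech ℕ)) := by
  have : ({stoneCechUnit n} : Set (StoneCech ℕ)) = {z | chi {n} z = true} := by
    ext z
    simp only [Set.mem_singleton_iff, Set.mem_setOf_eq]
    constructor
    · rintro rfl; simp [chi_unit]
    · intro h
      have h1 : ({n} : Set ℕ) ∈ uf z := h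
      obtain ⟨a, ha, hpz⟩ := Ultrafilter.eq_pure_of_finite_mem (Set.finite_singleton n) h1
      rw [Set.mem_singleton_iff] at ha
      subst ha
      rw [← uf_unit] at hpz
      exact (uf_injective hpz)
  rw [this]; exact isOpen_chiT _

lemma isOpen_range_unit : IsOpen (range (stoneCechUnit : ℕ → StoneCech ℕ)) := by
  have : range (stoneCechUnit : ℕ → StoneCech ℕ) = ⋃ n, {stoneCechUnit n} := by
    ext z; simp [eq_comm]
  rw [this]
  exact isOpen_iUnion fun n => isOpen_singleton_unit n

lemma isClosed_omegaStar : IsClosed omegaStar :=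
  isOpen_range_unit.isClosed_compl

/-- clopen neighborhood basis. -/
lemma exists_clopen_basis {u : StoneCech ℕ} {V : Set (StoneCech ℕ)} (hV : IsOpen V)
    (hu : u ∈ V) : ∃ W ∈ uf u, ∀ v, W ∈ uf v → v ∈ V := by
  obtain ⟨φ, hφ0, hφ1, hφmem⟩ :=
    exists_continuous_zero_one_of_isClosed (isClosed_singleton : IsClosed ({u} : Set (StoneCech ℕ)))
      hV.isClosed_compl (by simp [Set.disjoint_left, hu])
  set W : Set ℕ := {n | φ (stoneCechUnit n) < 1/2} with hW
  refine ⟨W, ?_, ?_⟩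
  · -- chi W u = true
    have hC : ∀ z, chi W z = true ∨ (1/2 : ℝ) ≤ φ z := by
      intro z
      refine forall_of_unit (P := {z | chi W z = true ∨ (1/2 : ℝ) ≤ φ z}) ?_ ?_ z
      · refine IsClosed.union ?_ ?_
        · exact IsClosed.preimage (chi_cont W) (isClosed_discrete ({true} : Set Bool))
        · exact isClosed_le continuous_const φ.continuous
      · intro n
        by_cases h : φ (stoneCechUnit n) < 1/2
        · left
          have hnW : n ∈ W := h
          simp [chi_unit, hnW]
        · right; exact le_of_not_gt h
    rcases hC u with h | h
    · exact h
    · exfalso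
      have : φ u = 0 := hφ0 rfl
      rw [this] at h; norm_num at h
  · intro v hv
    by_contra hvV
    have hφv : φ v = 1 := hφ1 hvV
    have hC : ∀ z, chi W z = false ∨ φ z ≤ (1/2 : ℝ) := by
      intro z
      refine forall_of_unit (P := {z | chi W z = false ∨ φ z ≤ (1/2 : ℝ)}) ?_ ?_ z
      · refine IsClosed.union ?_ ?_
        · exact IsClosed.preimage (chi_cont W) (isClosed_discrete ({false} : Set Bool))
        · exact isClosed_le φ.continuous continuous_const
      · intro n
        by_cases h : φ (stoneCechUnit n) < 1/2
        · right; linarith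
        · left
          have : n ∉ W := by simpa [hW] using h
          simp [chi_unit, this]
    rcases hC v with h | h
    · rw [mem_uf] at hv; rw [hv] at h; cases h
    · rw [hφv] at h; norm_num at h

lemma exists_isolating {g : ℕ → StoneCech ℕ}
    (hd : DiscreteTopology (Set.range g)) (n : ℕ) :
    ∃ V : Set (StoneCech ℕ), IsOpen V ∧ V ∩ Set.range g = {g n} := by
  have h1 : IsOpen ({⟨g n, ⟨n, rfl⟩⟩} : Set (Set.range g)) := isOpen_discrete _
  rw [isOpen_induced_iff] at h1
  obtain ⟨V, hV, hVeq⟩ := h1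
  refine ⟨V, hV, ?_⟩
  ext z
  constructor
  · rintro ⟨hzV, hzr⟩
    have : (⟨z, hzr⟩ : Set.range g) ∈ (Subtype.val ⁻¹' V : Set (Set.range g)) := hzV
    rw [hVeq] at this
    simpa using congrArg Subtype.val this
  · rintro rfl
    refine ⟨?_, ⟨n, rfl⟩⟩
    have : (⟨g n, ⟨n, rfl⟩⟩ : Set.range g) ∈ (Subtype.val ⁻¹' V : Set (Set.range g)) := by
      rw [hVeq]; rfl
    exact this

lemma discrete_of_isolating {A : Set (StoneCech ℕ)}
    (h : ∀ a ∈ A, ∃ V, IsOpen V ∧ V ∩ A = {a}) : DiscreteTopology A := by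
  rw [discreteTopology_iff_isOpen_singleton]
  rintro ⟨a, ha⟩
  obtain ⟨V, hV, hVA⟩ := h a ha
  have : ({(⟨a, ha⟩ : A)} : Set A) = Subtype.val ⁻¹' V := by
    ext ⟨z, hz⟩
    simp only [Set.mem_singleton_iff, Set.mem_preimage, Subtype.mk.injEq]
    constructor
    · rintro rfl
      have hin : z ∈ V ∩ A := by rw [hVA]; exact Set.mem_singleton _
      exact hin.1
    · intro hzV
      have : z ∈ V ∩ A := ⟨hzV, hz⟩
      rw [hVA] at this
      exact this
  rw [this]
  exact hV.preimage continuous_subtype_val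

lemma exists_supports {g : ℕ → StoneCech ℕ} (hg : Function.Injective g)
    (hd : DiscreteTopology (Set.range g)) :
    ∃ T : ℕ → Set ℕ, (∀ n, T n ∈ uf (g n)) ∧
      (∀ n m, n ≠ m → Disjoint (T n) (T m)) := by
  have hW : ∀ n : ℕ, ∃ W : Set ℕ, W ∈ uf (g n) ∧ ∀ m, m ≠ n → W ∉ uf (g m) := by
    intro n
    obtain ⟨V, hV, hVr⟩ := exists_isolating hd n
    have hgn : g n ∈ V := by
      have : g n ∈ V ∩ Set.range g := by rw [hVr]; rfl
      exact this.1
    obtain ⟨W, hW1, hW2⟩ := exists_clopen_basis hV hgn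
    refine ⟨W, hW1, ?_⟩
    intro m hm hWm
    have : g m ∈ V ∩ Set.range g := ⟨hW2 _ hWm, ⟨m, rfl⟩⟩
    rw [hVr] at this
    exact hm (hg this)
  choose W hW1 hW2 using hW
  refine ⟨fun n => W n ∩ ⋂ k ∈ Finset.range n, (W k)ᶜ, ?_, ?_⟩
  · intro n
    refine Filter.inter_mem (hW1 n) ?_
    refine (Filter.biInter_finset_mem _).2 ?_
    intro k hk
    rw [Finset.mem_range] at hk
    exact Ultrafilter.compl_mem_iff_notMem.2 (hW2 k n (Nat.ne_of_gt hk) )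
  · intro n m hnm
    rw [Set.disjoint_left]
    rintro t ⟨htWn, htIn⟩ ⟨htWm, htIm⟩
    rcases Nat.lt_or_ge n m with h | h
    · have h2 : t ∈ (W n)ᶜ := Set.mem_iInter₂.1 htIm n (Finset.mem_range.2 h)
      exact h2 htWn
    · have hlt : m < n := by omega
      have h2 : t ∈ (W m)ᶜ := Set.mem_iInter₂.1 htIn m (Finset.mem_range.2 hlt)
      exact h2 htWm

lemma stoneExt_mem_closure (g : ℕ → StoneCech ℕ) (p : StoneCech ℕ) :
    stoneExt g p ∈ closure (Set.range g) :=
  mem_closure_of_tendsto (tendsto_stoneExt g p)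
    (Filter.Eventually.of_forall fun n => Set.mem_range_self n)

lemma pOp_subset_omegaStar {p : StoneCech ℕ} {X : Set (StoneCech ℕ)}
    (hX : X ⊆ omegaStar) : pOp p X ⊆ omegaStar := by
  rintro y (hy | ⟨f, -, hfr, -, rfl⟩)
  · exact hX hy
  · have h1 : closure (Set.range f) ⊆ omegaStar :=
      isClosed_omegaStar.closure_subset_iff.2 (hfr.trans hX)
    exact h1 (stoneExt_mem_closure f p)

lemma reindex {q : Ultrafilter ℕ} (hfree : ∀ S ∈ q, S.Infinite) {S : Set ℕ}
    (hS : S ∈ q) :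
    ∃ e : ℕ → ℕ, Function.Injective e ∧ Set.range e ⊆ S ∧ Ultrafilter.map e q = q := by
  classical
  have hSinf : S.Infinite := hfree S hS
  set φ := hSinf.natEmbedding
  set R : Set ℕ := Set.range (fun k => (φ (2*k)).1) with hR
  have hRinf : R.Infinite := by
    apply Set.infinite_range_of_injective
    intro a b hab
    have := φ.injective (Subtype.val_injective hab)
    omega
  have hRS : R ⊆ S := by rintro - ⟨k, rfl⟩; exact (φ (2*k)).2
  have hSRinf : (S \ R).Infinite := by
    have : Set.range (fun k => (φ (2*k+1)).1) ⊆ S \ R := by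
      rintro - ⟨k, rfl⟩
      refine ⟨(φ (2*k+1)).2, ?_⟩
      rintro ⟨j, hj⟩
      have := φ.injective (Subtype.val_injective hj)
      omega
    refine Set.Infinite.mono this ?_
    apply Set.infinite_range_of_injective
    intro a b hab
    have := φ.injective (Subtype.val_injective hab)
    omega
  obtain ⟨S₀, S₁, hS₀, hS₁, hsub₀, hsub₁, hdisj⟩ :
      ∃ S₀ S₁ : Set ℕ, S₀ ∈ q ∧ S₁.Infinite ∧ S₀ ⊆ S ∧ S₁ ⊆ S ∧ Disjoint S₀ S₁ := by
    rcases q.mem_or_compl_mem R with h | h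
    · exact ⟨R, S \ R, h, hSRinf, hRS, Set.diff_subset, Set.disjoint_sdiff_right⟩
    · refine ⟨S \ R, R, ?_, hRinf, Set.diff_subset, hRS, Set.disjoint_sdiff_left⟩
      have : S ∩ Rᶜ ∈ q := Filter.inter_mem hS h
      simpa [Set.diff_eq] using this
  set θ := hS₁.natEmbedding
  refine ⟨fun n => if n ∈ S₀ then n else (θ n).1, ?_, ?_, ?_⟩
  · intro a b hab
    by_cases ha : a ∈ S₀ <;> by_cases hb : b ∈ S₀ <;> simp only [ha, hb, if_pos, if_neg,
      if_true, if_false] at hab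
    · exact hab
    · exfalso
      exact (Set.disjoint_left.1 hdisj) (hab ▸ ha) (θ b).2
    · exfalso
      exact (Set.disjoint_left.1 hdisj) (hab ▸ hb) (θ a).2
    · exact θ.injective (Subtype.val_injective hab)
  · rintro - ⟨n, rfl⟩
    show (if n ∈ S₀ then n else (θ n).1) ∈ S
    by_cases h : n ∈ S₀
    · rw [if_pos h]; exact hsub₀ h
    · rw [if_neg h]; exact hsub₁ (θ n).2
  · ext W
    rw [Ultrafilter.mem_map]
    constructor
    · intro h
      have h2 : (fun n => if n ∈ S₀ then n else (θ n).1) ⁻¹' W ∩ S₀ ∈ q :=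
        Filter.inter_mem h hS₀
      refine Filter.mem_of_superset h2 ?_
      rintro n ⟨hnW, hn₀⟩
      rw [Set.mem_preimage, if_pos hn₀] at hnW
      exact hnW
    · intro h
      have h2 : W ∩ S₀ ∈ q := Filter.inter_mem h hS₀
      refine Filter.mem_of_superset h2 ?_
      rintro n ⟨hnW, hn₀⟩
      rw [Set.mem_preimage, if_pos hn₀]
      exact hnW

lemma tendsto_reindex {g : ℕ → StoneCech ℕ} {q : Ultrafilter ℕ} {x : StoneCech ℕ}
    {e : ℕ → ℕ} (hmap : Ultrafilter.map e q = q)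
    (h : Tendsto g (q : Filter ℕ) (𝓝 x)) :
    Tendsto (g ∘ e) (q : Filter ℕ) (𝓝 x) := by
  rw [← hmap] at h
  rw [Ultrafilter.coe_map] at h
  exact h.comp Filter.tendsto_map

lemma three_set_finite (f : ℕ → ℕ) (s : Finset ℕ) :
    ∃ c : ℕ → Fin 3, ∀ n ∈ s, f n ≠ n → c n ≠ c (f n) := by
  classical
  induction s using Finset.strongInduction with
  | _ s ih =>
    rcases s.eq_empty_or_nonempty with rfl | hne
    · exact ⟨fun _ => 0, by simp⟩
    have hv : ∃ v ∈ s, ((s.erase v).filter (fun u => f u = v)).card ≤ 1 := by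
      by_contra hno
      push_neg at hno
      set P : ℕ → Finset ℕ := fun v => (s.erase v).filter (fun u => f u = v) with hP
      have hdisj : ∀ v1 ∈ s, ∀ v2 ∈ s, v1 ≠ v2 → Disjoint (P v1) (P v2) := by
        intro v1 _ v2 _ h12
        rw [Finset.disjoint_left]
        intro u hu1 hu2
        rw [hP] at hu1 hu2
        have e1 := (Finset.mem_filter.1 hu1).2
        have e2 := (Finset.mem_filter.1 hu2).2
        exact h12 (e1 ▸ e2 ▸ rfl)
      have hsub : s.biUnion P ⊆ s := by
        intro u hu
        obtain ⟨v, _, huv⟩ := Finset.mem_biUnion.1 hu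
        exact Finset.mem_of_mem_erase (Finset.mem_filter.1 huv).1
      have hcard : (s.biUnion P).card = ∑ v ∈ s, (P v).card :=
        Finset.card_biUnion hdisj
      have h1 : ∑ v ∈ s, (P v).card ≤ s.card := by
        rw [← hcard]; exact Finset.card_le_card hsub
      have h2 : ∑ v ∈ s, 2 ≤ ∑ v ∈ s, (P v).card := by
        refine Finset.sum_le_sum ?_
        intro v hvs
        exact hno v hvs
      rw [Finset.sum_const, smul_eq_mul] at h2
      have h3 := hne.card_pos
      omega
    obtain ⟨v, hvs, hcard⟩ := hv
    obtain ⟨c, hc⟩ := ih (s.erase v) (Finset.erase_ssubset hvs)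
    set pre : Finset ℕ := (s.erase v).filter (fun u => f u = v) with hpre
    set bad : Finset (Fin 3) := insert (c (f v)) (pre.image c) with hbad
    have hbadcard : bad.card ≤ 2 := by
      refine le_trans (Finset.card_insert_le _ _) ?_
      have := Finset.card_image_le (s := pre) (f := c)
      omega
    have hex : ∃ i : Fin 3, i ∉ bad := by
      by_contra hall
      push_neg at hall
      have hsub : (Finset.univ : Finset (Fin 3)) ⊆ bad := fun i _ => hall i
      have := Finset.card_le_card hsub
      simp only [Finset.card_univ, Fintype.card_fin] at this
      omega
    obtain ⟨i, hi⟩ := hex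
    refine ⟨Function.update c v i, ?_⟩
    intro n hns hfn
    by_cases hnv : n = v
    · subst hnv
      rw [Function.update_self, Function.update_of_ne hfn]
      intro heq
      exact hi (heq ▸ Finset.mem_insert_self _ _)
    · rw [Function.update_of_ne hnv]
      by_cases hfv : f n = v
      · rw [hfv, Function.update_self]
        intro heq
        apply hi
        rw [hbad]
        refine Finset.mem_insert_of_mem (Finset.mem_image.2 ⟨n, ?_, heq⟩)
        rw [hpre]
        exact Finset.mem_filter.2 ⟨Finset.mem_erase.2 ⟨hnv, hns⟩, hfv⟩
      · rw [Function.update_of_ne hfv]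
        exact hc n (Finset.mem_erase.2 ⟨hnv, hns⟩) hfn

lemma three_set (f : ℕ → ℕ) : ∃ c : ℕ → Fin 3, ∀ n, f n ≠ n → c n ≠ c (f n) := by
  classical
  letI : TopologicalSpace (Fin 3) := ⊥
  haveI : DiscreteTopology (Fin 3) := ⟨rfl⟩
  set Z : ℕ → Set (ℕ → Fin 3) := fun n => {c | f n ≠ n → c n ≠ c (f n)} with hZ
  have hZc : ∀ n, IsClosed (Z n) := by
    intro n
    by_cases h : f n = n
    · have : Z n = Set.univ := by
        ext c; simp [hZ, h]
      rw [this]; exact isClosed_univ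
    · have h2 : Z n = (fun c : ℕ → Fin 3 => (c n, c (f n))) ⁻¹' {q | q.1 ≠ q.2} := by
        ext c; simp [hZ, h]
      rw [h2]
      exact (isClosed_discrete _).preimage ((continuous_apply n).prodMk (continuous_apply (f n)))
  by_contra hcon
  push_neg at hcon
  have hempty : (Set.univ : Set (ℕ → Fin 3)) ∩ ⋂ n, Z n = ∅ := by
    rw [Set.eq_empty_iff_forall_notMem]
    rintro c ⟨-, hcmem⟩
    obtain ⟨n, hn1, hn2⟩ := hcon c
    exact ((Set.mem_iInter.1 hcmem n) hn1) hn2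
  obtain ⟨t, ht⟩ := IsCompact.elim_finite_subfamily_closed isCompact_univ Z hZc hempty
  obtain ⟨c, hc⟩ := three_set_finite f t
  have : c ∈ (Set.univ : Set (ℕ → Fin 3)) ∩ ⋂ n ∈ t, Z n := by
    refine ⟨trivial, ?_⟩
    rw [Set.mem_iInter₂]
    intro n hn
    exact fun hfn => hc n hn hfn
  rw [ht] at this
  exact this

lemma rigidity (q : Ultrafilter ℕ) (σ : ℕ → ℕ) (h : Ultrafilter.map σ q = q) :
    {n | σ n = n} ∈ q := by
  by_contra hE
  have hE' : {n | σ n ≠ n} ∈ q := by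
    have h2 := Ultrafilter.compl_mem_iff_notMem.2 hE
    have h3 : {n | σ n = n}ᶜ = {n | σ n ≠ n} := by
      ext n; simp
    rwa [h3] at h2
  obtain ⟨c, hc⟩ := three_set σ
  have hA : ∃ i : Fin 3, {n | c n = i} ∈ q := by
    rcases q.mem_or_compl_mem {n | c n = 0} with h0 | h0
    · exact ⟨0, h0⟩
    rcases q.mem_or_compl_mem {n | c n = 1} with h1 | h1
    · exact ⟨1, h1⟩
    refine ⟨2, ?_⟩
    have h2 := Filter.inter_mem h0 h1
    refine Filter.mem_of_superset h2 ?_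
    rintro n ⟨hn0, hn1⟩
    simp only [Set.mem_compl_iff, Set.mem_setOf_eq] at hn0 hn1 ⊢
    have hv := (c n).2
    have e0 : (c n).1 ≠ 0 := fun hh => hn0 (Fin.ext hh)
    have e1 : (c n).1 ≠ 1 := fun hh => hn1 (Fin.ext hh)
    have : (c n).1 = 2 := by omega
    exact Fin.ext this
  obtain ⟨i, hAi⟩ := hA
  have hpre : σ ⁻¹' {n | c n = i} ∈ q := by
    have h2 : {n | c n = i} ∈ Ultrafilter.map σ q := by rw [h]; exact hAi
    exact Ultrafilter.mem_map.1 h2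
  have hmem := Filter.inter_mem (Filter.inter_mem hAi hpre) hE'
  obtain ⟨n, ⟨hn1, hn2⟩, hn3⟩ := Ultrafilter.nonempty_of_mem hmem
  have hn1' : c n = i := hn1
  have hn2' : c (σ n) = i := hn2
  exact hc n hn3 (hn1'.trans hn2'.symm)

/-! ### Layer 4: uniqueness of p-limits (Frolík-style) -/

/-- index of the block containing `t`. -/
noncomputable def idxOf (T : ℕ → Set ℕ) (t : ℕ) : ℕ :=
  if h : ∃ k, t ∈ T k then h.choose else 0

lemma idxOf_eq {T : ℕ → Set ℕ} (hTd : ∀ n m, n ≠ m → Disjoint (T n) (T m))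
    {t n : ℕ} (ht : t ∈ T n) : idxOf T t = n := by
  have hex : ∃ k, t ∈ T k := ⟨n, ht⟩
  rw [idxOf, dif_pos hex]
  by_contra hne
  exact Set.disjoint_left.1 (hTd _ _ hne) hex.choose_spec ht

lemma mem_idx_preimage {d : ℕ → Ultrafilter ℕ} {T : ℕ → Set ℕ}
    (hT : ∀ n, T n ∈ d n) (hTd : ∀ n m, n ≠ m → Disjoint (T n) (T m))
    (n : ℕ) (B : Set ℕ) : (idxOf T) ⁻¹' B ∈ d n ↔ n ∈ B := by
  constructor
  · intro h
    obtain ⟨t, ht1, ht2⟩ := Ultrafilter.nonempty_of_mem (Filter.inter_mem h (hT n))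
    rw [Set.mem_preimage] at ht1
    rwa [idxOf_eq hTd ht2] at ht1
  · intro h
    refine Filter.mem_of_superset (hT n) ?_
    intro t ht
    rw [Set.mem_preimage, idxOf_eq hTd ht]
    exact h

lemma marginal {p : Ultrafilter ℕ} {d a : ℕ → Ultrafilter ℕ} {T : ℕ → Set ℕ}
    (hT : ∀ n, T n ∈ d n) (hTd : ∀ n m, n ≠ m → Disjoint (T n) (T m))
    (hsum : ∀ W : Set ℕ, ({n | W ∈ d n} ∈ p ↔ {m | W ∈ a m} ∈ p)) (B : Set ℕ) :
    ({m | (idxOf T) ⁻¹' B ∈ a m} ∈ p ↔ B ∈ p) := by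
  rw [← hsum]
  have h1 : {n | (idxOf T) ⁻¹' B ∈ d n} = B := by
    ext n; exact mem_idx_preimage hT hTd n B
  rw [h1]

/-- the value of a principal ultrafilter. -/
noncomputable def prin (u : Ultrafilter ℕ) : ℕ :=
  if h : ∃ m0, u = pure m0 then h.choose else 0

lemma prin_spec {u : Ultrafilter ℕ} (h : ∃ m0, u = pure m0) : u = pure (prin u) := by
  rw [prin, dif_pos h]
  exact h.choose_spec

lemma free_of_not_pure {u : Ultrafilter ℕ} (h : ¬ ∃ m0, u = pure m0)
    {F : Set ℕ} (hF : F.Finite) : F ∉ u := by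
  intro hmem
  obtain ⟨x, -, hx⟩ := Ultrafilter.eq_pure_of_finite_mem hF hmem
  exact h ⟨x, hx⟩

lemma exists_mem_not_mem {u v : Ultrafilter ℕ} (h : u ≠ v) : ∃ V, V ∈ v ∧ V ∉ u := by
  by_contra hno
  push_neg at hno
  have hle : (u : Filter ℕ) ≤ (v : Filter ℕ) := fun V hV => hno V hV
  exact h (Ultrafilter.coe_le_coe.1 hle)

lemma map_prin {p : Ultrafilter ℕ} {d a : ℕ → Ultrafilter ℕ} {T R : ℕ → Set ℕ}
    (hR : ∀ m, R m ∈ a m) (hRd : ∀ n m, n ≠ m → Disjoint (R n) (R m))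
    (hsum : ∀ W : Set ℕ, ({n | W ∈ d n} ∈ p ↔ {m | W ∈ a m} ∈ p))
    (hPs : {n | ∃ m0, (d n).map (idxOf R) = pure m0} ∈ p) :
    Ultrafilter.map (fun n => prin ((d n).map (idxOf R))) p = p := by
  set σ : ℕ → ℕ := fun n => prin ((d n).map (idxOf R)) with hσ
  have hmarg : ∀ B : Set ℕ, ({n | (idxOf R) ⁻¹' B ∈ d n} ∈ p ↔ B ∈ p) := by
    intro B
    exact marginal (d := a) (a := d) hR hRd (fun W => (hsum W).symm) B
  have htrace : ∀ B : Set ℕ,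
      σ ⁻¹' B ∩ {n | ∃ m0, (d n).map (idxOf R) = pure m0}
        = {n | (idxOf R) ⁻¹' B ∈ d n} ∩ {n | ∃ m0, (d n).map (idxOf R) = pure m0} := by
    intro B
    ext n
    simp only [Set.mem_inter_iff, Set.mem_preimage, Set.mem_setOf_eq]
    constructor
    · rintro ⟨hσn, hn⟩
      refine ⟨?_, hn⟩
      have : B ∈ (d n).map (idxOf R) := by
        rw [prin_spec hn]
        exact hσn
      exact Ultrafilter.mem_map.1 this
    · rintro ⟨hmem, hn⟩
      refine ⟨?_, hn⟩
      have : B ∈ (d n).map (idxOf R) := Ultrafilter.mem_map.2 hmem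
      rw [prin_spec hn] at this
      exact this
  ext B
  rw [Ultrafilter.mem_map]
  constructor
  · intro h
    have h2 := Filter.inter_mem h hPs
    rw [htrace B] at h2
    exact (hmarg B).1 (Filter.mem_of_superset h2 (fun n hn => hn.1))
  · intro h
    have h2 := Filter.inter_mem ((hmarg B).2 h) hPs
    rw [← htrace B] at h2
    exact Filter.mem_of_superset h2 (fun n hn => hn.1)

section LemmaU

variable {p : Ultrafilter ℕ} {d a : ℕ → Ultrafilter ℕ} {T R : ℕ → Set ℕ}

/-- Case: `s n` free for `p`-many `n`, `q m` free for `p`-many `m`. -/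
lemma lemmaU_ff
    (hT : ∀ n, T n ∈ d n) (hR : ∀ m, R m ∈ a m)
    (hTd : ∀ n m, n ≠ m → Disjoint (T n) (T m))
    (hRd : ∀ n m, n ≠ m → Disjoint (R n) (R m))
    (hsum : ∀ W : Set ℕ, ({n | W ∈ d n} ∈ p ↔ {m | W ∈ a m} ∈ p))
    (hPs : {n | ∃ m0, (d n).map (idxOf R) = pure m0}ᶜ ∈ p)
    (hPq : {m | ∃ n0, (a m).map (idxOf T) = pure n0}ᶜ ∈ p) : False := by
  set U : Set ℕ := {t | idxOf T t < idxOf R t} with hU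
  have hDu : {n | U ∈ d n} ∈ p := by
    refine Filter.mem_of_superset hPs ?_
    intro n hn
    have hfree : ∀ F : Set ℕ, F.Finite → F ∉ (d n).map (idxOf R) :=
      fun F hF => free_of_not_pure hn hF
    have h1 : {k | n < k} ∈ (d n).map (idxOf R) := by
      have h2 : {k | n < k}ᶜ ∉ (d n).map (idxOf R) := by
        refine hfree _ ?_
        have : {k | n < k}ᶜ = {k | k ≤ n} := by
          ext k; simp only [Set.mem_compl_iff, Set.mem_setOf_eq]; omega
        rw [this]
        exact Set.finite_Iic n
      exact Ultrafilter.compl_notMem_iff.1 h2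
    have h3 : (idxOf R) ⁻¹' {k | n < k} ∈ d n := Ultrafilter.mem_map.1 h1
    have h4 := Filter.inter_mem h3 (hT n)
    refine Filter.mem_of_superset h4 ?_
    rintro t ⟨ht1, ht2⟩
    show idxOf T t < idxOf R t
    rw [idxOf_eq hTd ht2]
    exact ht1
  have hAu : {m | U ∈ a m} ∈ p := (hsum U).1 hDu
  obtain ⟨m, hm1, hm2⟩ := Ultrafilter.nonempty_of_mem (Filter.inter_mem hAu hPq)
  have h5 : (idxOf T) ⁻¹' {k | k < m} ∈ a m := by
    have h6 := Filter.inter_mem (hm1 : U ∈ a m) (hR m)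
    refine Filter.mem_of_superset h6 ?_
    rintro t ⟨ht1, ht2⟩
    show idxOf T t < m
    have h8 : idxOf T t < idxOf R t := ht1
    rwa [idxOf_eq hRd ht2] at h8
  have h7 : {k | k < m} ∈ (a m).map (idxOf T) := Ultrafilter.mem_map.2 h5
  exact free_of_not_pure hm2 (Set.finite_Iio m) h7

/-- Shared principal-side computation. -/
lemma principal_side
    (hT : ∀ n, T n ∈ d n) (hR : ∀ m, R m ∈ a m)
    (hTd : ∀ n m, n ≠ m → Disjoint (T n) (T m))
    (hRd : ∀ n m, n ≠ m → Disjoint (R n) (R m))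
    (hsum : ∀ W : Set ℕ, ({n | W ∈ d n} ∈ p ↔ {m | W ∈ a m} ∈ p))
    (hPs : {n | ∃ m0, (d n).map (idxOf R) = pure m0} ∈ p) :
    {m | (idxOf T) ⁻¹' {n | prin ((d n).map (idxOf R)) = m} ∈ a m} ∈ p := by
  set mfun : ℕ → ℕ := fun n => prin ((d n).map (idxOf R)) with hmfun
  set U2 : Set ℕ := {t | idxOf R t = mfun (idxOf T t)} with hU2
  have hDu : {n | U2 ∈ d n} ∈ p := by
    refine Filter.mem_of_superset hPs ?_
    intro n hn
    have h1 : ({mfun n} : Set ℕ) ∈ (d n).map (idxOf R) := by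
      rw [prin_spec hn]
      exact Ultrafilter.mem_pure.2 rfl
    have h2 : (idxOf R) ⁻¹' {mfun n} ∈ d n := Ultrafilter.mem_map.1 h1
    have h3 := Filter.inter_mem h2 (hT n)
    refine Filter.mem_of_superset h3 ?_
    rintro t ⟨ht1, ht2⟩
    show idxOf R t = mfun (idxOf T t)
    rw [idxOf_eq hTd ht2]
    exact ht1
  have hAu : {m | U2 ∈ a m} ∈ p := (hsum U2).1 hDu
  refine Filter.mem_of_superset hAu ?_
  intro m hm
  have h4 := Filter.inter_mem (hm : U2 ∈ a m) (hR m)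
  refine Filter.mem_of_superset h4 ?_
  rintro t ⟨ht1, ht2⟩
  show mfun (idxOf T t) = m
  have h5 : idxOf R t = mfun (idxOf T t) := ht1
  rw [idxOf_eq hRd ht2] at h5
  exact h5.symm

/-- Case: principal on the `d`-side, free on the `a`-side. -/
lemma lemmaU_pf
    (hT : ∀ n, T n ∈ d n) (hR : ∀ m, R m ∈ a m)
    (hTd : ∀ n m, n ≠ m → Disjoint (T n) (T m))
    (hRd : ∀ n m, n ≠ m → Disjoint (R n) (R m))
    (hsum : ∀ W : Set ℕ, ({n | W ∈ d n} ∈ p ↔ {m | W ∈ a m} ∈ p))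
    (hPs : {n | ∃ m0, (d n).map (idxOf R) = pure m0} ∈ p)
    (hPq : {m | ∃ n0, (a m).map (idxOf T) = pure n0}ᶜ ∈ p) : False := by
  set mfun : ℕ → ℕ := fun n => prin ((d n).map (idxOf R)) with hmfun
  have hmapσ : Ultrafilter.map mfun p = p := map_prin (T := T) hR hRd hsum hPs
  have hE : {n | mfun n = n} ∈ p := rigidity p mfun hmapσ
  have hP0 := principal_side hT hR hTd hRd hsum hPs
  have hmargE : {m | (idxOf T) ⁻¹' {n | mfun n = n} ∈ a m} ∈ p :=
    (marginal hT hTd hsum {n | mfun n = n}).2 hE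
  obtain ⟨m, hm⟩ := Ultrafilter.nonempty_of_mem
    (Filter.inter_mem (Filter.inter_mem hP0 hmargE) hPq)
  obtain ⟨⟨hm1, hm2⟩, hm3⟩ := hm
  have h1 : (idxOf T) ⁻¹' ({n | mfun n = m} ∩ {n | mfun n = n}) ∈ a m := by
    rw [Set.preimage_inter]
    exact Filter.inter_mem hm1 hm2
  have h2 : ({n | mfun n = m} ∩ {n | mfun n = n}) ∈ (a m).map (idxOf T) :=
    Ultrafilter.mem_map.2 h1
  have h3 : ({n | mfun n = m} ∩ {n | mfun n = n}) ⊆ {m} := by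
    rintro n ⟨hn1, hn2⟩
    have : n = m := by rw [← hn2]; exact hn1
    exact this ▸ rfl
  exact free_of_not_pure hm3 ((Set.finite_singleton m).subset h3) h2

/-- Case: principal on both sides. -/
lemma lemmaU_pp
    (hT : ∀ n, T n ∈ d n) (hR : ∀ m, R m ∈ a m)
    (hTd : ∀ n m, n ≠ m → Disjoint (T n) (T m))
    (hRd : ∀ n m, n ≠ m → Disjoint (R n) (R m))
    (hda : ∀ n m, d n ≠ a m)
    (hsum : ∀ W : Set ℕ, ({n | W ∈ d n} ∈ p ↔ {m | W ∈ a m} ∈ p))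
    (hPs : {n | ∃ m0, (d n).map (idxOf R) = pure m0} ∈ p)
    (hPq : {m | ∃ n0, (a m).map (idxOf T) = pure n0} ∈ p) : False := by
  classical
  set mfun : ℕ → ℕ := fun n => prin ((d n).map (idxOf R)) with hmfun
  set kfun : ℕ → ℕ := fun m => prin ((a m).map (idxOf T)) with hkfun
  have hmapσ : Ultrafilter.map mfun p = p := map_prin (T := T) hR hRd hsum hPs
  have hP1 := principal_side (d := a) (a := d) (T := R) (R := T)
    hR hT hRd hTd (fun W => (hsum W).symm) hPq
  have hstarstar : ∀ n, n ∈ {n | (idxOf R) ⁻¹' {m | kfun m = n} ∈ d n} → n ∈ {n | ∃ m0, (d n).map (idxOf R) = pure m0} → kfun (mfun n) = n := by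
    intro n hn1 hn2
    have h1 : {m | kfun m = n} ∈ (d n).map (idxOf R) := Ultrafilter.mem_map.2 hn1
    rw [prin_spec hn2] at h1
    exact Ultrafilter.mem_pure.1 h1
  have hRU : {n | (⋃ m, R m) ∈ d n} ∈ p := by
    refine (hsum _).2 ?_
    refine Filter.univ_mem' ?_
    intro m
    exact Filter.mem_of_superset (hR m) (Set.subset_iUnion R m)
  have hTUa : {m | (⋃ n, T n) ∈ a m} ∈ p := by
    refine (hsum _).1 ?_
    refine Filter.univ_mem' ?_
    intro n
    exact Filter.mem_of_superset (hT n) (Set.subset_iUnion T n)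
  have hpre : mfun ⁻¹' ({m | ∃ n0, (a m).map (idxOf T) = pure n0} ∩ {m | (⋃ n, T n) ∈ a m}) ∈ p := by
    have h1 : ({m | ∃ n0, (a m).map (idxOf T) = pure n0} ∩ {m | (⋃ n, T n) ∈ a m}) ∈ Ultrafilter.map mfun p := by
      rw [hmapσ]
      exact Filter.inter_mem hPq hTUa
    exact Ultrafilter.mem_map.1 h1
  set P : Set ℕ := {n | ∃ m0, (d n).map (idxOf R) = pure m0} ∩ {n | (idxOf R) ⁻¹' {m | kfun m = n} ∈ d n} ∩ {n | (⋃ m, R m) ∈ d n} ∩ mfun ⁻¹' ({m | ∃ n0, (a m).map (idxOf T) = pure n0} ∩ {m | (⋃ n, T n) ∈ a m}) with hPdef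
  have hPmem : P ∈ p :=
    Filter.inter_mem (Filter.inter_mem (Filter.inter_mem hPs hP1) hRU) hpre
  -- block membership facts
  have hBd : ∀ n ∈ P, T n ∩ R (mfun n) ∈ d n := by
    rintro n ⟨⟨⟨hn1, -⟩, hn3⟩, -⟩
    have h1 : ({mfun n} : Set ℕ) ∈ (d n).map (idxOf R) := by
      rw [prin_spec hn1]; exact Ultrafilter.mem_pure.2 rfl
    have h2 : (idxOf R) ⁻¹' {mfun n} ∈ d n := Ultrafilter.mem_map.1 h1
    have h3 := Filter.inter_mem (Filter.inter_mem (hT n) h2) hn3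
    refine Filter.mem_of_superset h3 ?_
    rintro t ⟨⟨ht1, ht2⟩, ht3⟩
    refine ⟨ht1, ?_⟩
    obtain ⟨m', hm'⟩ := Set.mem_iUnion.1 ht3
    have : idxOf R t = m' := idxOf_eq hRd hm'
    have h4 : idxOf R t = mfun n := ht2
    have h6 : m' = mfun n := by rw [← this]; exact h4
    rwa [h6] at hm'
  have hBa : ∀ n ∈ P, T n ∩ R (mfun n) ∈ a (mfun n) := by
    intro n hn
    obtain ⟨⟨⟨hn1, hn2⟩, hn3⟩, hn4⟩ := hn
    obtain ⟨hq, hTU⟩ := hn4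
    have hkeq : kfun (mfun n) = n := hstarstar n hn2 hn1
    have h1 : ({kfun (mfun n)} : Set ℕ) ∈ (a (mfun n)).map (idxOf T) := by
      rw [prin_spec hq]; exact Ultrafilter.mem_pure.2 rfl
    have h2 : (idxOf T) ⁻¹' {kfun (mfun n)} ∈ a (mfun n) := Ultrafilter.mem_map.1 h1
    have h3 := Filter.inter_mem (Filter.inter_mem (hR (mfun n)) h2) hTU
    refine Filter.mem_of_superset h3 ?_
    rintro t ⟨⟨ht1, ht2⟩, ht3⟩
    refine ⟨?_, ht1⟩
    obtain ⟨n', hn'⟩ := Set.mem_iUnion.1 ht3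
    have h4 : idxOf T t = n' := idxOf_eq hTd hn'
    have h5 : idxOf T t = kfun (mfun n) := ht2
    rw [hkeq] at h5
    have h6 : n' = n := by rw [← h4]; exact h5
    rwa [h6] at hn'
  -- choose distinguishing sets
  have hWex : ∀ n, ∃ Wn : Set ℕ,
      n ∈ P → (Wn ∈ a (mfun n) ∧ Wn ∉ d n ∧ Wn ⊆ T n) := by
    intro n
    by_cases hn : n ∈ P
    · obtain ⟨V, hV1, hV2⟩ := exists_mem_not_mem (hda n (mfun n))
      refine ⟨V ∩ (T n ∩ R (mfun n)), fun _ => ⟨?_, ?_, ?_⟩⟩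
      · exact Filter.inter_mem hV1 (hBa n hn)
      · intro hmem
        exact hV2 (Filter.mem_of_superset hmem Set.inter_subset_left)
      · exact Set.inter_subset_right.trans Set.inter_subset_left
    · exact ⟨∅, fun h => absurd h hn⟩
  choose Wn hWn using hWex
  set W : Set ℕ := {t | ∃ n ∈ P, t ∈ Wn n} with hWdef
  have hAuW : {m' | W ∈ a m'} ∈ p := by
    have h1 : mfun ⁻¹' {m' | W ∈ a m'} ∈ p := by
      refine Filter.mem_of_superset hPmem ?_
      intro n hn
      show W ∈ a (mfun n)
      refine Filter.mem_of_superset (hWn n hn).1 ?_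
      intro t ht
      exact ⟨n, hn, ht⟩
    have h2 : {m' | W ∈ a m'} ∈ Ultrafilter.map mfun p := Ultrafilter.mem_map.2 h1
    rwa [hmapσ] at h2
  have hDuW : {n | W ∈ d n} ∈ p := (hsum W).2 hAuW
  obtain ⟨n, hn1, hn2⟩ := Ultrafilter.nonempty_of_mem (Filter.inter_mem hPmem hDuW)
  have h1 : W ∩ T n ∈ d n := Filter.inter_mem hn2 (hT n)
  have h2 : W ∩ T n ⊆ Wn n := by
    rintro t ⟨⟨n', hn', htn'⟩, htn⟩
    have hsub := (hWn n' hn').2.2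
    by_cases he : n' = n
    · exact he ▸ htn'
    · exact absurd htn (Set.disjoint_left.1 (hTd n' n he) (hsub htn'))
  have h3 : Wn n ∈ d n := Filter.mem_of_superset h1 h2
  exact (hWn n hn1).2.1 h3

/-- no point is simultaneously a `p`-limit of two disjoint discrete families. -/
lemma lemmaU
    (hT : ∀ n, T n ∈ d n) (hR : ∀ m, R m ∈ a m)
    (hTd : ∀ n m, n ≠ m → Disjoint (T n) (T m))
    (hRd : ∀ n m, n ≠ m → Disjoint (R n) (R m))
    (hda : ∀ n m, d n ≠ a m)
    (hsum : ∀ W : Set ℕ, ({n | W ∈ d n} ∈ p ↔ {m | W ∈ a m} ∈ p)) : False := by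
  rcases p.mem_or_compl_mem {n | ∃ m0, (d n).map (idxOf R) = pure m0} with hPs | hPs
  · rcases p.mem_or_compl_mem {m | ∃ n0, (a m).map (idxOf T) = pure n0} with hPq | hPq
    · exact lemmaU_pp hT hR hTd hRd hda hsum hPs hPq
    · exact lemmaU_pf hT hR hTd hRd hsum hPs hPq
  · rcases p.mem_or_compl_mem {m | ∃ n0, (a m).map (idxOf T) = pure n0} with hPq | hPq
    · exact lemmaU_pf hR hT hRd hTd (fun W => (hsum W).symm) hPq hPs
    · exact lemmaU_ff hT hR hTd hRd hsum hPs hPq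

end LemmaU

/-! ### Layer 5: topological consequences -/

lemma no_two_limits {p x : StoneCech ℕ} {f₀ f₁ : ℕ → StoneCech ℕ}
    (hi₀ : Function.Injective f₀) (hi₁ : Function.Injective f₁)
    (hd₀ : DiscreteTopology (Set.range f₀)) (hd₁ : DiscreteTopology (Set.range f₁))
    (hdis : ∀ n m, f₀ n ≠ f₁ m)
    (he₀ : stoneExt f₀ p = x) (he₁ : stoneExt f₁ p = x) : False := by
  obtain ⟨T, hT, hTd⟩ := exists_supports hi₀ hd₀
  obtain ⟨R, hR, hRd⟩ := exists_supports hi₁ hd₁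
  refine lemmaU (p := uf p) (d := fun n => uf (f₀ n)) (a := fun m => uf (f₁ m))
    hT hR hTd hRd ?_ ?_
  · intro n m hequ
    exact hdis n m (uf_injective hequ)
  · intro W
    exact (uf_sum he₀ W).symm.trans (uf_sum he₁ W)

lemma copy_extract {p : StoneCech ℕ} (hp : p ∈ omegaStar) {s : Set (StoneCech ℕ)}
    (h : ↥(omegaP p) ≃ₜ ↥s) :
    ∃ g : ℕ → StoneCech ℕ, ∃ x : StoneCech ℕ, Function.Injective g ∧
      DiscreteTopology (Set.range g) ∧ stoneExt g p = x ∧ x ∉ Set.range g ∧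
      Set.range g ⊆ s ∧ x ∈ s := by
  have hpmem : p ∈ omegaP p := Or.inr rfl
  have humem : ∀ n, stoneCechUnit n ∈ omegaP p := fun n => Or.inl ⟨n, rfl⟩
  set g : ℕ → StoneCech ℕ := fun n => (h ⟨stoneCechUnit n, humem n⟩).1 with hgdef
  set x : StoneCech ℕ := (h ⟨p, hpmem⟩).1 with hxdef
  have hginj : Function.Injective g := by
    intro n m hnm
    have h1 : h ⟨stoneCechUnit n, humem n⟩ = h ⟨stoneCechUnit m, humem m⟩ :=
      Subtype.ext hnm
    have h2 := h.injective h1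
    exact unit_injective (congrArg Subtype.val h2)
  have hxr : x ∉ Set.range g := by
    rintro ⟨n, hn⟩
    have h1 : h ⟨stoneCechUnit n, humem n⟩ = h ⟨p, hpmem⟩ := Subtype.ext hn
    have h2 := h.injective h1
    exact hp ⟨n, congrArg Subtype.val h2⟩
  have hrs : Set.range g ⊆ s := by
    rintro - ⟨n, rfl⟩
    exact (h ⟨stoneCechUnit n, humem n⟩).2
  have hdisc : DiscreteTopology (Set.range g) := by
    refine discrete_of_isolating ?_
    rintro - ⟨n, rfl⟩
    have h1 : IsOpen ({⟨stoneCechUnit n, humem n⟩} : Set (omegaP p)) := by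
      have : ({⟨stoneCechUnit n, humem n⟩} : Set (omegaP p))
          = Subtype.val ⁻¹' {stoneCechUnit n} := by
        ext u
        simp [Subtype.ext_iff]
      rw [this]
      exact (isOpen_singleton_unit n).preimage continuous_subtype_val
    have h2 : IsOpen (h '' {⟨stoneCechUnit n, humem n⟩}) := h.isOpenMap _ h1
    rw [Set.image_singleton] at h2
    rw [isOpen_induced_iff] at h2
    obtain ⟨V, hV, hVeq⟩ := h2
    refine ⟨V, hV, ?_⟩
    ext z
    constructor
    · rintro ⟨hzV, m, rfl⟩
      have h3 : (⟨g m, hrs ⟨m, rfl⟩⟩ : s) ∈ (Subtype.val ⁻¹' V : Set s) := hzV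
      rw [hVeq] at h3
      have h4 : g m = g n := congrArg Subtype.val h3
      exact h4 ▸ rfl
    · rintro rfl
      refine ⟨?_, ⟨n, rfl⟩⟩
      have h3 : (h ⟨stoneCechUnit n, humem n⟩ : s) ∈ (Subtype.val ⁻¹' V : Set s) := by
        rw [hVeq]; rfl
      exact h3
  have hext : stoneExt g p = x := by
    set φ₁ : ↥(omegaP p) → StoneCech ℕ := fun u => (h u).1 with hφ₁
    set φ₂ : ↥(omegaP p) → StoneCech ℕ := fun u => stoneExt g u.1 with hφ₂
    have hc₁ : Continuous φ₁ := continuous_subtype_val.comp h.continuous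
    have hc₂ : Continuous φ₂ := (continuous_stoneCechExtend _).comp continuous_subtype_val
    set D : Set ↥(omegaP p) := {u | ∃ n, u.1 = stoneCechUnit n} with hD
    have hDdense : Dense D := by
      intro u
      rw [mem_closure_iff]
      intro O hO huO
      rw [isOpen_induced_iff] at hO
      obtain ⟨V, hV, rfl⟩ := hO
      obtain ⟨k, hk⟩ := denseRange_stoneCechUnit.exists_mem_open hV ⟨u.1, huO⟩
      exact ⟨⟨stoneCechUnit k, humem k⟩, hk, ⟨k, rfl⟩⟩
    have heq : Set.EqOn φ₁ φ₂ D := by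
      rintro u ⟨n, hn⟩
      have hu : u = ⟨stoneCechUnit n, humem n⟩ := Subtype.ext hn
      subst hu
      show (h ⟨stoneCechUnit n, humem n⟩).1 = stoneExt g (stoneCechUnit n)
      have := congrFun (stoneCechExtend_extends (g := g)
        (continuous_of_discreteTopology (f := g))) n
      exact this.symm
    have hfull := Continuous.ext_on hDdense hc₁ hc₂ heq
    have := congrFun hfull ⟨p, hpmem⟩
    exact this.symm
  exact ⟨g, x, hginj, hdisc, hext, hxr, hrs, (h ⟨p, hpmem⟩).2⟩

lemma copy_homeo {p x : StoneCech ℕ} {g : ℕ → StoneCech ℕ}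
    (hp : p ∈ omegaStar) (hg : Function.Injective g)
    (hdisc : DiscreteTopology (Set.range g))
    (hx : stoneExt g p = x) (hxg : x ∉ Set.range g) :
    Nonempty (↥(omegaP p) ≃ₜ ↥(Set.range g ∪ {x} : Set (StoneCech ℕ))) := by
  classical
  obtain ⟨T, hT, hTd⟩ := exists_supports hg hdisc
  have htend : Tendsto g (uf p : Filter ℕ) (𝓝 x) := hx ▸ tendsto_stoneExt g p
  have humem : ∀ n, stoneCechUnit n ∈ omegaP p := fun n => Or.inl ⟨n, rfl⟩
  have hpmem : p ∈ omegaP p := Or.inr rfl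
  have hgmem : ∀ n, g n ∈ (Set.range g ∪ {x} : Set (StoneCech ℕ)) :=
    fun n => Or.inl ⟨n, rfl⟩
  have hxmem : x ∈ (Set.range g ∪ {x} : Set (StoneCech ℕ)) := Or.inr rfl
  have hpnu : ¬ ∃ n, p = stoneCechUnit n := by
    rintro ⟨n, rfl⟩; exact hp ⟨n, rfl⟩
  have hxng : ¬ ∃ n, x = g n := by
    rintro ⟨n, hn⟩; exact hxg ⟨n, hn.symm⟩
  set F : ↥(omegaP p) → ↥(Set.range g ∪ {x} : Set (StoneCech ℕ)) :=
    fun u => if h : ∃ n, u.1 = stoneCechUnit n then ⟨g h.choose, hgmem _⟩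
      else ⟨x, hxmem⟩ with hF
  set G : ↥(Set.range g ∪ {x} : Set (StoneCech ℕ)) → ↥(omegaP p) :=
    fun v => if h : ∃ n, v.1 = g n then ⟨stoneCechUnit h.choose, humem _⟩
      else ⟨p, hpmem⟩ with hG
  have hFunit : ∀ (n : ℕ) (hu : stoneCechUnit n ∈ omegaP p),
      F ⟨stoneCechUnit n, hu⟩ = ⟨g n, hgmem n⟩ := by
    intro n hu
    have hex : ∃ m, (⟨stoneCechUnit n, hu⟩ : ↥(omegaP p)).1 = stoneCechUnit m := ⟨n, rfl⟩
    rw [hF]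
    simp only [dif_pos hex]
    have := hex.choose_spec
    have h2 : hex.choose = n := unit_injective this.symm
    exact Subtype.ext (by rw [h2])
  have hFp : ∀ (hu : p ∈ omegaP p), F ⟨p, hu⟩ = ⟨x, hxmem⟩ := by
    intro hu
    rw [hF]
    simp only [dif_neg hpnu]
  have hGg : ∀ (n : ℕ) (hv : g n ∈ (Set.range g ∪ {x} : Set (StoneCech ℕ))),
      G ⟨g n, hv⟩ = ⟨stoneCechUnit n, humem n⟩ := by
    intro n hv
    have hex : ∃ m, (⟨g n, hv⟩ : ↥(Set.range g ∪ {x} : Set (StoneCech ℕ))).1 = g m := ⟨n, rfl⟩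
    rw [hG]
    simp only [dif_pos hex]
    have := hex.choose_spec
    have h2 : hex.choose = n := hg this.symm
    exact Subtype.ext (by rw [h2])
  have hGx : ∀ (hv : x ∈ (Set.range g ∪ {x} : Set (StoneCech ℕ))),
      G ⟨x, hv⟩ = ⟨p, hpmem⟩ := by
    intro hv
    rw [hG]
    simp only [dif_neg hxng]
  have hleft : ∀ u, G (F u) = u := by
    rintro ⟨u, hu⟩
    rcases hu with hur | hup
    · obtain ⟨n, rfl⟩ := hur
      rw [hFunit n (humem n), hGg n (hgmem n)]
    · rw [Set.mem_singleton_iff] at hup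
      subst hup
      rw [hFp hpmem, hGx hxmem]
  have hright : ∀ v, F (G v) = v := by
    rintro ⟨v, hv⟩
    rcases hv with hvr | hvx
    · obtain ⟨n, rfl⟩ := hvr
      rw [hGg n (hgmem n), hFunit n (humem n)]
    · rw [Set.mem_singleton_iff] at hvx
      subst hvx
      rw [hGx hxmem, hFp hpmem]
  -- continuity of F
  have hFcont : Continuous F := by
    rw [continuous_iff_continuousAt]
    rintro ⟨u, hu⟩
    rcases hu with hur | hup
    · obtain ⟨n, rfl⟩ := hur
      have hopen : IsOpen ({(⟨stoneCechUnit n, humem n⟩ : ↥(omegaP p))} : Set ↥(omegaP p)) := by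
        have heq : ({(⟨stoneCechUnit n, humem n⟩ : ↥(omegaP p))} : Set ↥(omegaP p))
            = Subtype.val ⁻¹' {stoneCechUnit n} := by
          ext w; simp [Subtype.ext_iff]
        rw [heq]
        exact (isOpen_singleton_unit n).preimage continuous_subtype_val
      have hnp := (isOpen_singleton_iff_nhds_eq_pure _).1 hopen
      show ContinuousAt F _
      rw [ContinuousAt, hnp]
      exact tendsto_pure_nhds F _
    · rw [Set.mem_singleton_iff] at hup
      subst hup
      show ContinuousAt F ⟨u, hpmem⟩
      have hFval : F ⟨u, hpmem⟩ = ⟨x, hxmem⟩ := hFp _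
      rw [ContinuousAt, hFval, tendsto_subtype_rng]
      rw [tendsto_nhds]
      intro V hV hxV
      have hB : {n | g n ∈ V} ∈ uf u := htend (hV.mem_nhds hxV)
      set B : Set ℕ := {n | g n ∈ V} with hBdef
      have hO : IsOpen {z | chi B z = true} := isOpen_chiT B
      have hpO : u ∈ {z | chi B z = true} := hB
      have hsubmem : Subtype.val ⁻¹' {z | chi B z = true} ∈ 𝓝 (⟨u, hpmem⟩ : ↥(omegaP u)) :=
        continuous_subtype_val.continuousAt.preimage_mem_nhds (hO.mem_nhds hpO)
      refine Filter.mem_of_superset hsubmem ?_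
      rintro ⟨w, hw⟩ hwO
      show (Subtype.val ∘ F) ⟨w, hw⟩ ∈ V
      by_cases hex : ∃ n, w = stoneCechUnit n
      · have : (Subtype.val ∘ F) ⟨w, hw⟩ = g hex.choose := by
          simp only [Function.comp_apply, hF, dif_pos hex]
        rw [this]
        have hspec := hex.choose_spec
        have hwO2 : chi B w = true := hwO
        rw [hspec, chi_unit] at hwO2
        by_cases hcB : hex.choose ∈ B
        · exact hcB
        · rw [if_neg hcB] at hwO2; cases hwO2
      · have : (Subtype.val ∘ F) ⟨w, hw⟩ = x := by
          simp only [Function.comp_apply, hF, dif_neg hex]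
        rw [this]
        exact hxV
  -- continuity of G
  have hGcont : Continuous G := by
    rw [continuous_iff_continuousAt]
    rintro ⟨v, hv⟩
    rcases hv with hvr | hvx
    · obtain ⟨n, rfl⟩ := hvr
      obtain ⟨V, hVopen, hViso⟩ := exists_isolating hdisc n
      have hne : g n ≠ x := fun he => hxg (he ▸ ⟨n, rfl⟩)
      obtain ⟨U₁, U₂, hU₁, hU₂, hgU₁, hxU₂, hdisj⟩ := t2_separation hne
      have hopen : IsOpen ({(⟨g n, hgmem n⟩ : ↥(Set.range g ∪ {x} : Set (StoneCech ℕ)))} :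
          Set ↥(Set.range g ∪ {x} : Set (StoneCech ℕ))) := by
        have heq : ({(⟨g n, hgmem n⟩ : ↥(Set.range g ∪ {x} : Set (StoneCech ℕ)))} :
            Set ↥(Set.range g ∪ {x} : Set (StoneCech ℕ)))
            = Subtype.val ⁻¹' (V ∩ U₁) := by
          ext ⟨w, hw⟩
          simp only [Set.mem_singleton_iff, Set.mem_preimage, Subtype.mk.injEq,
            Set.mem_inter_iff]
          constructor
          · rintro rfl
            have : g n ∈ V ∩ Set.range g := by rw [hViso]; exact Set.mem_singleton _
            exact ⟨this.1, hgU₁⟩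
          · rintro ⟨hwV, hwU₁⟩
            rcases hw with hwr | hwx
            · have : w ∈ V ∩ Set.range g := ⟨hwV, hwr⟩
              rw [hViso] at this
              exact this
            · rw [Set.mem_singleton_iff] at hwx
              subst hwx
              exact absurd hwU₁ (Set.disjoint_left.1 hdisj.symm hxU₂)
        rw [heq]
        exact (hVopen.inter hU₁).preimage continuous_subtype_val
      have hnp := (isOpen_singleton_iff_nhds_eq_pure _).1 hopen
      show ContinuousAt G _
      rw [ContinuousAt, hnp]
      exact tendsto_pure_nhds G _
    · rw [Set.mem_singleton_iff] at hvx
      subst hvx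
      show ContinuousAt G ⟨v, hxmem⟩
      have hGval : G ⟨v, hxmem⟩ = ⟨p, hpmem⟩ := hGx _
      rw [ContinuousAt, hGval, tendsto_subtype_rng]
      rw [tendsto_nhds]
      intro V hV hpV
      have hB : {n | stoneCechUnit n ∈ V} ∈ uf p := tendsto_unit_uf p (hV.mem_nhds hpV)
      set B : Set ℕ := {n | stoneCechUnit n ∈ V} with hBdef
      set K : Set ℕ := ⋃ n ∈ Bᶜ, T n with hKdef
      have hKx : chi K v = false := by
        have hKnot : K ∉ uf v := by
          rw [← hx] at *
          have hsum2 := uf_sum (rfl : stoneExt g p = stoneExt g p) K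
          intro hKmem
          have h2 : {n | K ∈ uf (g n)} ∈ uf p := hsum2.1 hKmem
          have h3 : {n | K ∈ uf (g n)} ⊆ Bᶜ := by
            intro n hn
            by_contra hnB
            rw [Set.notMem_compl_iff] at hnB
            have hKT : K ∩ T n = ∅ := by
              rw [Set.eq_empty_iff_forall_notMem]
              rintro t ⟨htK, htn⟩
              obtain ⟨m, hm⟩ := Set.mem_iUnion.1 htK
              obtain ⟨hmB, htm⟩ := Set.mem_iUnion.1 hm
              exact Set.disjoint_left.1 (hTd m n (fun he => hmB (he ▸ hnB))) htm htn
            obtain ⟨t, ht⟩ := Ultrafilter.nonempty_of_mem (Filter.inter_mem hn (hT n))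
            rw [hKT] at ht
            exact ht
          have h4 : Bᶜ ∈ uf p := Filter.mem_of_superset h2 h3
          exact Ultrafilter.compl_notMem_iff.2 hB h4
        cases hchi : chi K v
        · rfl
        · exact absurd (mem_uf.2 hchi) hKnot
      have hO : IsOpen {z | chi K z = false} := isOpen_chiF K
      have hvO : v ∈ {z | chi K z = false} := hKx
      have hsubmem : Subtype.val ⁻¹' {z | chi K z = false}
          ∈ 𝓝 (⟨v, hxmem⟩ : ↥(Set.range g ∪ {v} : Set (StoneCech ℕ))) :=
        continuous_subtype_val.continuousAt.preimage_mem_nhds (hO.mem_nhds hvO)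
      refine Filter.mem_of_superset hsubmem ?_
      rintro ⟨w, hw⟩ hwO
      show (Subtype.val ∘ G) ⟨w, hw⟩ ∈ V
      by_cases hex : ∃ n, w = g n
      · have hval : (Subtype.val ∘ G) ⟨w, hw⟩ = stoneCechUnit hex.choose := by
          simp only [Function.comp_apply, hG, dif_pos hex]
        rw [hval]
        have hspec := hex.choose_spec
        by_cases hcB : hex.choose ∈ B
        · exact hcB
        · exfalso
          have hTsub : T hex.choose ⊆ K := by
            intro t ht
            exact Set.mem_iUnion.2 ⟨hex.choose, Set.mem_iUnion.2 ⟨hcB, ht⟩⟩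
          have hKmem : K ∈ uf (g hex.choose) :=
            Filter.mem_of_superset (hT hex.choose) hTsub
          have hwO2 : chi K w = false := hwO
          rw [hspec] at hwO2
          rw [mem_uf] at hKmem
          rw [hKmem] at hwO2
          cases hwO2
      · have hval : (Subtype.val ∘ G) ⟨w, hw⟩ = p := by
          simp only [Function.comp_apply, hG, dif_neg hex]
        rw [hval]
        exact hpV
  exact ⟨{ toFun := F, invFun := G, left_inv := hleft, right_inv := hright,
           continuous_toFun := hFcont, continuous_invFun := hGcont }⟩

end L59

open L59

/-- Lemma 5.9: a 2-coloring of a `𝒯(p)`-open set `X ⊆ ω*` with no monochromatic copy of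
`ω ∪ {p}` extends to a 2-coloring of `X^p` with no monochromatic copy of `ω ∪ {p}`. -/
theorem coloring_extends_to_pOp (p : StoneCech ℕ) (hp : p ∈ omegaStar)
    (X : Set (StoneCech ℕ)) (hX : TpOpen p X) (c : StoneCech ℕ → Bool)
    (hc : ∀ s : Set (StoneCech ℕ), s ⊆ X → Nonempty (↥(omegaP p) ≃ₜ ↥s) →
      ¬ ∃ b : Bool, ∀ x ∈ s, c x = b) :
    ∃ c' : StoneCech ℕ → Bool, (∀ x ∈ X, c' x = c x) ∧
      ∀ s : Set (StoneCech ℕ), s ⊆ pOp p X → Nonempty (↥(omegaP p) ≃ₜ ↥s) →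
        ¬ ∃ b : Bool, ∀ x ∈ s, c' x = b := by
  classical
  set Wit : Bool → StoneCech ℕ → Prop := fun b y => ∃ f : ℕ → StoneCech ℕ,
    Function.Injective f ∧ Set.range f ⊆ X ∧ (∀ n, c (f n) = b) ∧
    DiscreteTopology (Set.range f) ∧ stoneExt f p = y with hWit
  have hfree : ∀ S ∈ uf p, S.Infinite := uf_free hp
  have hexcl : ∀ y, ¬ (Wit true y ∧ Wit false y) := by
    rintro y ⟨⟨f₁, hi₁, hr₁, hcc₁, hd₁, he₁⟩, ⟨f₀, hi₀, hr₀, hcc₀, hd₀, he₀⟩⟩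
    refine no_two_limits hi₁ hi₀ hd₁ hd₀ ?_ he₁ he₀
    intro n m heq
    have h1 := hcc₁ n
    rw [heq, hcc₀ m] at h1
    cases h1
  set c' : StoneCech ℕ → Bool :=
    fun z => if z ∈ X then c z else (if Wit true z then false else true) with hc'
  refine ⟨c', fun z hz => by simp only [hc', if_pos hz], ?_⟩
  rintro s hs ⟨h⟩ ⟨b, hmono⟩
  obtain ⟨g, x, hginj, hgdisc, hgext, hxg, hgs, hxs⟩ := copy_extract hp h
  have hgb : ∀ n, c' (g n) = b := fun n => hmono _ (hgs ⟨n, rfl⟩)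
  have hxb : c' x = b := hmono _ hxs
  set SX : Set ℕ := {n | g n ∈ X} with hSX
  have htendg : Tendsto g (uf p : Filter ℕ) (𝓝 x) := hgext ▸ tendsto_stoneExt g p
  rcases (uf p).mem_or_compl_mem SX with hcase | hcase
  · -- the `p`-large part of the copy is inside `X`
    obtain ⟨e, heinj, her, hemap⟩ := reindex hfree hcase
    have hg'inj : Function.Injective (g ∘ e) := hginj.comp heinj
    have hg'disc : DiscreteTopology (Set.range (g ∘ e)) :=
      DiscreteTopology.of_subset hgdisc (by rintro - ⟨n, rfl⟩; exact ⟨e n, rfl⟩)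
    have hg'tend : Tendsto (g ∘ e) (uf p : Filter ℕ) (𝓝 x) := tendsto_reindex hemap htendg
    have hg'ext : stoneExt (g ∘ e) p = x := stoneExt_eq_of_tendsto hg'tend
    have hg'X : ∀ n, (g ∘ e) n ∈ X := fun n => her ⟨n, rfl⟩
    have hg'b : ∀ n, c ((g ∘ e) n) = b := by
      intro n
      have h1 : (if (g ∘ e) n ∈ X then c ((g ∘ e) n)
          else if Wit true ((g ∘ e) n) then false else true) = b := hgb (e n)
      rwa [if_pos (hg'X n)] at h1
    have hxg' : x ∉ Set.range (g ∘ e) := by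
      rintro ⟨n, hn⟩; exact hxg ⟨e n, hn⟩
    by_cases hxX : x ∈ X
    · have hhom := copy_homeo hp hg'inj hg'disc hg'ext hxg'
      refine hc (Set.range (g ∘ e) ∪ {x}) ?_ hhom ⟨b, ?_⟩
      · rintro z (⟨n, rfl⟩ | hz)
        · exact hg'X n
        · rw [Set.mem_singleton_iff] at hz; exact hz ▸ hxX
      · rintro z (⟨n, rfl⟩ | hz)
        · exact hg'b n
        · rw [Set.mem_singleton_iff] at hz
          subst hz
          have h2 : c' z = c z := by simp only [hc', if_pos hxX]
          rw [← h2]; exact hxb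
    · have hWb : Wit b x :=
        ⟨g ∘ e, hg'inj, by rintro - ⟨n, rfl⟩; exact hg'X n, hg'b, hg'disc, hg'ext⟩
      cases b with
      | true =>
        have h1 : c' x = false := by simp only [hc', if_neg hxX, if_pos hWb]
        rw [hxb] at h1; cases h1
      | false =>
        have hWtrue : Wit true x := by
          by_contra hnt
          have h1 : c' x = true := by simp only [hc', if_neg hxX, if_neg hnt]
          rw [hxb] at h1; cases h1
        exact hexcl x ⟨hWtrue, hWb⟩
  · -- the `p`-large part of the copy consists of new points
    obtain ⟨e, heinj, her, hemap⟩ := reindex hfree hcase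
    have hg'inj : Function.Injective (g ∘ e) := hginj.comp heinj
    have hg'disc : DiscreteTopology (Set.range (g ∘ e)) :=
      DiscreteTopology.of_subset hgdisc (by rintro - ⟨n, rfl⟩; exact ⟨e n, rfl⟩)
    have hg'tend : Tendsto (g ∘ e) (uf p : Filter ℕ) (𝓝 x) := tendsto_reindex hemap htendg
    have hg'ext : stoneExt (g ∘ e) p = x := stoneExt_eq_of_tendsto hg'tend
    have hg'star : ∀ n, (g ∘ e) n ∈ omegaStar \ X := by
      intro n
      have h1 : (g ∘ e) n ∈ pOp p X := hs (hgs ⟨e n, rfl⟩)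
      have h2 : e n ∈ SXᶜ := her ⟨n, rfl⟩
      exact ⟨pOp_subset_omegaStar hX.1 h1, h2⟩
    have hxpop : x ∈ pOp p (omegaStar \ X) :=
      Or.inr ⟨g ∘ e, hg'inj, by rintro - ⟨n, rfl⟩; exact hg'star n, hg'disc, hg'ext⟩
    have hxnX : x ∉ X := by
      rw [hX.2] at hxpop
      exact hxpop.2
    rcases hs hxs with hxX | ⟨f, hfi, hfr, hfd, hfe⟩
    · exact hxnX hxX
    · refine no_two_limits hfi hg'inj hfd hg'disc ?_ hfe hg'ext
      intro n m heq
      exact (hg'star m).2 (heq ▸ hfr ⟨n, rfl⟩)
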